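/- With Q_n ∈ R[z] the Casoratian of x₁, x₃, …, x_{2n−1} over R = ℚ[t₁, t₂, t₃, …], define q_k := Q_k evaluated at z = 0 (an element of R), with q₋₁ = q₀ = 1. Then for every k ≥ 1: (i) the formal partial derivative ∂q_k/∂t_j vanishes whenever j is even or j > 2k−1, so q_k is a polynomial in the odd variables t₁, t₃, …, t_{2k−1} only; (ii) ∂q_k/∂t_{2k−1} = ((−1)^{k+1}/(2k−1))·q_{k−2}; in particular q_k is linear in t_{2k−1}, of the form q_k = ((−1)^{k+1}/(2k−1))·q_{k−2}·t_{2k−1} + ψ_k(t₁, t₃, …, t_{2k−3}). -/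

import Mathlib

open Polynomial

noncomputable section

/-- The base ring `R = ℚ[t₁, t₂, t₃, …]`: polynomials in countably many
variables `t_j = MvPolynomial.X j` (only indices `j ≥ 1` occur). -/
abbrev Rt : Type := MvPolynomial ℕ ℚ

/-- `z_j := (-1)^{j+1} (z + t_j)` as an element of `R[z]`. -/
def zj (j : ℕ) : Polynomial Rt :=
  (-1) ^ (j + 1) * (X + C (MvPolynomial.X j))

/-- The `k×k` lower Hessenberg matrix `M_k` with (1-indexed) entries
`(M_k)_{IJ} = z_{I-J+1}` for `J ≤ I`, `(M_k)_{I,I+1} = -I`, and `0` otherwise.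
Below `i j : Fin k` are 0-indexed, i.e. `I = i+1`, `J = j+1`. -/
def Mhess (k : ℕ) : Matrix (Fin k) (Fin k) (Polynomial Rt) :=
  Matrix.of fun i j =>
    if (j : ℕ) ≤ (i : ℕ) then zj ((i : ℕ) - (j : ℕ) + 1)
    else if (j : ℕ) = (i : ℕ) + 1 then -(((i : ℕ) + 1 : ℕ) : Polynomial Rt)
    else 0

/-- `x₀ := 1` and `x_k := (1/k!) det M_k` for `k ≥ 1`; these satisfy
`x_k(z+1) - x_k(z) = x_{k-1}(z)` and have generating function
`exp (Σ_{k≥1} (-1)^{k+1} (z+t_k) u^k / k)`. -/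
def xpoly (k : ℕ) : Polynomial Rt :=
  if k = 0 then 1
  else C (MvPolynomial.C ((k.factorial : ℚ)⁻¹)) * (Mhess k).det

/-- `Q_n := det (x_{2i-1}(z+j-1))_{i,j=1,…,n}`, the Casoratian of
`x₁, x₃, …, x_{2n-1}` (here `i j : Fin n` are 0-indexed, so the row function is
`x_{2i+1}` and the `j`-th column is composition with `z + j`); `Q 0 = 1`. -/
def Qcas (n : ℕ) : Polynomial Rt :=
  Matrix.det (Matrix.of fun i j : Fin n =>
    (xpoly (2 * (i : ℕ) + 1)).comp (X + C ((j : ℕ) : Rt)))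

/-- `q_k := Q_k(0) ∈ R` (so `q 0 = 1 = q₀`). -/
def qval (k : ℕ) : Rt := (Qcas k).eval 0

end
noncomputable section Aux
open Finset Matrix

/-! ### generic helpers -/

lemma val_succAbove {n : ℕ} (p : Fin (n + 1)) (i : Fin n) :
    ((p.succAbove i : Fin (n + 1)) : ℕ) = if (i : ℕ) < (p : ℕ) then (i : ℕ) else (i : ℕ) + 1 := by
  rw [Fin.succAbove]
  split_ifs with h1 h2 h2
  · rfl
  · exact absurd (Fin.lt_def.mp h1) h2
  · exact absurd (Fin.lt_def.mpr (by simpa using h2)) h1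
  · rfl

lemma deriv_prod {ι : Type*} [DecidableEq ι] (D : Derivation ℚ Rt Rt) (s : Finset ι)
    (g : ι → Rt) :
    D (∏ i ∈ s, g i) = ∑ i ∈ s, D (g i) * ∏ j ∈ s.erase i, g j := by
  induction s using Finset.induction_on with
  | empty => simp
  | @insert a s ha ih =>
    rw [Finset.prod_insert ha, Derivation.leibniz, Finset.sum_insert ha,
      Finset.erase_insert ha]
    have h2 : ∀ i ∈ s, D (g i) * ∏ j ∈ (insert a s).erase i, g j
        = g a * (D (g i) * ∏ j ∈ s.erase i, g j) := by
      intro i hi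
      have hia : i ≠ a := fun h => ha (h ▸ hi)
      rw [Finset.erase_insert_of_ne hia.symm,
        Finset.prod_insert (fun h => ha (Finset.mem_of_mem_erase h))]
      ring
    rw [Finset.sum_congr rfl h2, ← Finset.mul_sum, ← ih]
    simp [smul_eq_mul]
    ring

lemma deriv_det {n : ℕ} (D : Derivation ℚ Rt Rt) (A : Matrix (Fin n) (Fin n) Rt) :
    D A.det = ∑ i, (A.updateRow i fun j => D (A i j)).det := by
  have hdet : ∀ B : Matrix (Fin n) (Fin n) Rt,
      B.det = ∑ σ : Equiv.Perm (Fin n), (Equiv.Perm.sign σ : ℤ) * ∏ i, B i (σ i) := by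
    intro B
    rw [← Matrix.det_transpose B, Matrix.det_apply']
    rfl
  rw [hdet, map_sum]
  have h1 : ∀ σ : Equiv.Perm (Fin n),
      D ((Equiv.Perm.sign σ : ℤ) * ∏ i, A i (σ i))
        = ∑ i, (Equiv.Perm.sign σ : ℤ) *
            (D (A i (σ i)) * ∏ j ∈ Finset.univ.erase i, A j (σ j)) := by
    intro σ
    have : ((Equiv.Perm.sign σ : ℤ) : Rt) * ∏ i, A i (σ i)
        = (Equiv.Perm.sign σ : ℤ) • ∏ i, A i (σ i) := by
      rw [zsmul_eq_mul]
    rw [this, map_zsmul, deriv_prod, Finset.smul_sum]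
    refine Finset.sum_congr rfl fun i _ => ?_
    rw [zsmul_eq_mul]
  rw [Finset.sum_congr rfl fun σ _ => h1 σ, Finset.sum_comm]
  refine Finset.sum_congr rfl fun i _ => ?_
  rw [hdet]
  refine Finset.sum_congr rfl fun σ _ => ?_
  congr 1
  rw [← Finset.mul_prod_erase Finset.univ _ (Finset.mem_univ i)]
  rw [Matrix.updateRow_self]
  congr 1
  exact Finset.prod_congr rfl fun j hj =>
    (congrFun (Matrix.updateRow_ne (Finset.ne_of_mem_erase hj)) (σ j)).symm

lemma fact_prod {j k : ℕ} (h : j ≤ k) :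
    j.factorial * ∏ i ∈ Finset.Ico j k, (i + 1) = k.factorial := by
  induction k, h using Nat.le_induction with
  | base => simp
  | succ k hk ih =>
    rw [Finset.prod_Ico_succ_top hk, ← mul_assoc, ih, Nat.factorial_succ, mul_comm]

end Aux
open Finset Matrix Polynomial in
lemma Mhess_congr {k k' : ℕ} (i j : Fin k) (i' j' : Fin k')
    (hi : (i : ℕ) = (i' : ℕ)) (hj : (j : ℕ) = (j' : ℕ)) :
    Mhess k i j = Mhess k' i' j' := by
  simp only [Mhess, Matrix.of_apply, hi, hj]

open Finset Matrix Polynomial in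
lemma detN : ∀ (k j : ℕ) (h : j ≤ k),
    ((Mhess (k + 1)).submatrix Fin.castSucc (Fin.succAbove ⟨j, by omega⟩)).det
      = (∏ i ∈ Finset.Ico j k, -(((i : ℕ) + 1 : ℕ) : Polynomial Rt)) * (Mhess j).det := by
  intro k j h
  induction k, h using Nat.le_induction with
  | base =>
    have hlast : (⟨j, by omega⟩ : Fin (j + 1)) = Fin.last j := rfl
    rw [hlast, Fin.succAbove_last, Finset.Ico_self, Finset.prod_empty, one_mul]
    rfl
  | succ k hk ih =>
    have hjlt : j < k + 2 := by omega
    set A := (Mhess (k + 2)).submatrix Fin.castSucc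
        (Fin.succAbove (⟨j, hjlt⟩ : Fin (k + 2))) with hA
    have h1 : ((Fin.succAbove (⟨j, hjlt⟩ : Fin (k + 2)) (Fin.last k)) : ℕ) = k + 1 := by
      rw [val_succAbove]
      simp only [Fin.val_last]
      rw [if_neg (by omega)]
    have hcol : ∀ i : Fin (k + 1), A i (Fin.last k)
        = if (i : ℕ) = k then -((k + 1 : ℕ) : Polynomial Rt) else 0 := by
      intro i
      simp only [hA, Matrix.submatrix_apply, Mhess, Matrix.of_apply, h1, Fin.coe_castSucc]
      rw [if_neg (by omega)]
      by_cases hi : (i : ℕ) = k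
      · rw [if_pos (by omega), if_pos hi, hi]
      · rw [if_neg (by omega), if_neg hi]
    rw [Matrix.det_succ_column A (Fin.last k),
      Finset.sum_eq_single_of_mem (Fin.last k) (Finset.mem_univ _) (fun i _ hne => by
        rw [hcol i, if_neg (fun hv => hne (Fin.ext (by simpa using hv))), mul_zero, zero_mul])]
    rw [hcol, if_pos (by simp)]
    have hminor : A.submatrix (Fin.last k).succAbove (Fin.last k).succAbove
        = (Mhess (k + 1)).submatrix Fin.castSucc
            (Fin.succAbove (⟨j, by omega⟩ : Fin (k + 1))) := by
      rw [Fin.succAbove_last]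
      refine Matrix.ext fun r c => ?_
      simp only [hA, Matrix.submatrix_apply]
      apply Mhess_congr
      · rfl
      · rw [val_succAbove, val_succAbove]
        rfl
    rw [hminor, ih, Finset.prod_Ico_succ_top hk]
    have hsgn : ((-1 : Polynomial Rt)) ^ ((Fin.last k : ℕ) + (Fin.last k : ℕ)) = 1 := by
      rw [Fin.val_last, show k + k = 2 * k from by ring, pow_mul]
      norm_num
    rw [hsgn, one_mul]
    ring
open Finset Matrix Polynomial in
lemma xpoly_eq (j : ℕ) :
    xpoly j = C (MvPolynomial.C ((j.factorial : ℚ)⁻¹)) * (Mhess j).det := by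
  rcases j with _ | j
  · simp [xpoly, Matrix.det_fin_zero]
  · rw [xpoly, if_neg (Nat.succ_ne_zero j)]

open Finset Matrix Polynomial in
lemma det_Mhess_succ (k : ℕ) : (Mhess (k + 1)).det
    = ∑ j ∈ Finset.range (k + 1), zj (k - j + 1) *
        (((∏ i ∈ Finset.Ico j k, (i + 1) : ℕ) : Polynomial Rt) * (Mhess j).det) := by
  rw [Matrix.det_succ_row (Mhess (k + 1)) (Fin.last k), ← Fin.sum_univ_eq_sum_range]
  refine Finset.sum_congr rfl fun j _ => ?_
  have hj : (j : ℕ) ≤ k := by omega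
  have hentry : Mhess (k + 1) (Fin.last k) j = zj (k - (j : ℕ) + 1) := by
    simp only [Mhess, Matrix.of_apply, Fin.val_last]
    rw [if_pos hj]
  have hsub : ((Mhess (k + 1)).submatrix (Fin.last k).succAbove j.succAbove).det
      = (∏ i ∈ Finset.Ico (j : ℕ) k, -(((i + 1 : ℕ)) : Polynomial Rt))
          * (Mhess (j : ℕ)).det := by
    rw [Fin.succAbove_last]
    exact detN k (j : ℕ) hj
  have hneg : (∏ i ∈ Finset.Ico (j : ℕ) k, -(((i + 1 : ℕ)) : Polynomial Rt))
      = (-1) ^ (k - (j : ℕ))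
          * ((∏ i ∈ Finset.Ico (j : ℕ) k, (i + 1) : ℕ) : Polynomial Rt) := by
    rw [Nat.cast_prod,
      Finset.prod_congr rfl fun i (_ : i ∈ Finset.Ico (j : ℕ) k) =>
        (neg_one_mul (((i + 1 : ℕ) : Polynomial Rt))).symm,
      Finset.prod_mul_distrib, Finset.prod_const, Nat.card_Ico]
  have hs : ((-1 : Polynomial Rt)) ^ ((Fin.last k : ℕ) + (j : ℕ)) * (-1) ^ (k - (j : ℕ))
      = 1 := by
    rw [Fin.val_last, ← pow_add, show k + (j : ℕ) + (k - (j : ℕ)) = 2 * k from by omega,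
      pow_mul]
    norm_num
  rw [hentry, hsub, hneg]
  linear_combination (zj (k - (j : ℕ) + 1) *
    (((∏ i ∈ Finset.Ico (j : ℕ) k, (i + 1) : ℕ) : Polynomial Rt)
      * (Mhess (j : ℕ)).det)) * hs

open Finset Matrix Polynomial in
lemma xpoly_rec (k : ℕ) : ((k + 1 : ℕ) : Polynomial Rt) * xpoly (k + 1)
    = ∑ j ∈ Finset.range (k + 1), zj (k + 1 - j) * xpoly j := by
  rw [xpoly_eq (k + 1), det_Mhess_succ, Finset.mul_sum, Finset.mul_sum]
  refine Finset.sum_congr rfl fun j hj => ?_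
  have hjk : j ≤ k := by simpa [Nat.lt_succ_iff] using hj
  rw [xpoly_eq j]
  have hscal : ((k + 1 : ℕ) : Polynomial Rt) * C (MvPolynomial.C (((k + 1).factorial : ℚ)⁻¹))
      * ((∏ i ∈ Finset.Ico j k, (i + 1) : ℕ) : Polynomial Rt)
      = C (MvPolynomial.C ((j.factorial : ℚ)⁻¹)) := by
    rw [show ((k + 1 : ℕ) : Polynomial Rt) = C (MvPolynomial.C ((k + 1 : ℕ) : ℚ)) from by
        push_cast; simp,
      show ((∏ i ∈ Finset.Ico j k, (i + 1) : ℕ) : Polynomial Rt)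
          = C (MvPolynomial.C (((∏ i ∈ Finset.Ico j k, (i + 1) : ℕ) : ℕ) : ℚ)) from by
        push_cast; simp,
      ← _root_.map_mul, ← _root_.map_mul, ← _root_.map_mul, ← _root_.map_mul]
    congr 1
    congr 1
    have hfp := fact_prod hjk
    have hq : ((j.factorial : ℚ)) * ((∏ i ∈ Finset.Ico j k, (i + 1) : ℕ) : ℚ)
        = (k.factorial : ℚ) := by exact_mod_cast congrArg (Nat.cast : ℕ → ℚ) hfp
    have h1 : (k.factorial : ℚ) ≠ 0 := Nat.cast_ne_zero.mpr (Nat.factorial_ne_zero k)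
    have h2 : (j.factorial : ℚ) ≠ 0 := Nat.cast_ne_zero.mpr (Nat.factorial_ne_zero j)
    have h3 : ((k + 1).factorial : ℚ) ≠ 0 := Nat.cast_ne_zero.mpr (Nat.factorial_ne_zero _)
    have h4 : ((k + 1 : ℕ) : ℚ) ≠ 0 := Nat.cast_ne_zero.mpr (Nat.succ_ne_zero k)
    rw [Nat.factorial_succ, Nat.cast_mul, mul_inv, ← mul_assoc, mul_inv_cancel₀ h4, one_mul]
    field_simp
    push_cast at hq
    push_cast
    linear_combination hq
  calc ((k + 1 : ℕ) : Polynomial Rt) * (C (MvPolynomial.C (((k + 1).factorial : ℚ)⁻¹)) *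
        (zj (k - j + 1) * (((∏ i ∈ Finset.Ico j k, (i + 1) : ℕ) : Polynomial Rt)
          * (Mhess j).det)))
      = zj (k - j + 1) * ((((k + 1 : ℕ) : Polynomial Rt)
          * C (MvPolynomial.C (((k + 1).factorial : ℚ)⁻¹))
          * ((∏ i ∈ Finset.Ico j k, (i + 1) : ℕ) : Polynomial Rt)) * (Mhess j).det) := by
        ring
    _ = zj (k + 1 - j) * (C (MvPolynomial.C ((j.factorial : ℚ)⁻¹)) * (Mhess j).det) := by
        rw [hscal, show k + 1 - j = k - j + 1 from by omega]
noncomputable def Fv (k : ℕ) (c : Rt) : Rt := (xpoly k).eval c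
noncomputable def Zv (m : ℕ) (c : Rt) : Rt := (zj m).eval c

lemma Fv_zero (c : Rt) : Fv 0 c = 1 := by simp [Fv, xpoly]

open Polynomial in
lemma Zv_eq (m : ℕ) (c : Rt) : Zv m c = (-1) ^ (m + 1) * (c + MvPolynomial.X m) := by
  simp [Zv, zj]

open Polynomial in
lemma Fv_rec (k : ℕ) (c : Rt) : ((k + 1 : ℕ) : Rt) * Fv (k + 1) c
    = ∑ j ∈ Finset.range (k + 1), Zv (k + 1 - j) c * Fv j c := by
  have h := congrArg (Polynomial.eval c) (xpoly_rec k)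
  simpa [Fv, Zv, Polynomial.eval_finset_sum] using h

lemma nat_cancel {n : ℕ} (hn : n ≠ 0) {a b : Rt} (h : (n : Rt) * a = (n : Rt) * b) :
    a = b :=
  mul_left_cancel₀ (Nat.cast_ne_zero.mpr hn) h

lemma Fv_diff : ∀ (k : ℕ) (c : Rt), Fv (k + 1) (c + 1) = Fv (k + 1) c + Fv k c := by
  intro k
  induction k using Nat.strong_induction_on with
  | _ k ih =>
  intro c
  apply nat_cancel (Nat.succ_ne_zero k)
  rw [Fv_rec]
  have hsplit : ∀ j ∈ Finset.range (k + 1), Zv (k + 1 - j) (c + 1) * Fv j (c + 1)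
      = Zv (k + 1 - j) c * Fv j c
        + Zv (k + 1 - j) c * (if j = 0 then 0 else Fv (j - 1) c)
        + ((-1 : Rt) ^ (k - j) * Fv j c
        + (-1 : Rt) ^ (k - j) * (if j = 0 then 0 else Fv (j - 1) c)) := by
    intro j hj
    have hjk : j ≤ k := by
      have := Finset.mem_range.mp hj; omega
    have hZ : Zv (k + 1 - j) (c + 1) = Zv (k + 1 - j) c + (-1 : Rt) ^ (k - j) := by
      rw [Zv_eq, Zv_eq, show k + 1 - j + 1 = (k - j) + 2 from by omega]
      ring
    have hF : Fv j (c + 1) = Fv j c + (if j = 0 then 0 else Fv (j - 1) c) := by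
      rcases j with _ | j'
      · simp [Fv_zero]
      · simp only [Nat.succ_ne_zero, if_false, Nat.succ_sub_one]
        exact ih j' (by omega) c
    rw [hZ, hF]
    ring
  rw [Finset.sum_congr rfl hsplit]
  simp only [Finset.sum_add_distrib]
  have hT2 : ∑ j ∈ Finset.range (k + 1), Zv (k + 1 - j) c * (if j = 0 then 0 else Fv (j - 1) c)
      = ((k : ℕ) : Rt) * Fv k c := by
    rw [Finset.sum_range_succ']
    simp only [Nat.succ_ne_zero, if_false, Nat.succ_sub_one, if_true, Nat.sub_zero, mul_zero, add_zero,
      Nat.succ_sub_succ]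
    rcases k with _ | m
    · simp
    · exact (Fv_rec m c).symm
  have hT3 : ∑ j ∈ Finset.range (k + 1), (-1 : Rt) ^ (k - j) * Fv j c
      = (∑ j ∈ Finset.range k, (-1 : Rt) ^ (k - j) * Fv j c) + Fv k c := by
    rw [Finset.sum_range_succ, Nat.sub_self, pow_zero, one_mul]
  have hT4 : ∑ j ∈ Finset.range (k + 1), (-1 : Rt) ^ (k - j) * (if j = 0 then 0 else Fv (j - 1) c)
      = - ∑ i ∈ Finset.range k, (-1 : Rt) ^ (k - i) * Fv i c := by
    rw [Finset.sum_range_succ']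
    simp only [Nat.succ_ne_zero, if_false, Nat.succ_sub_one, if_true, Nat.sub_zero, mul_zero, add_zero]
    rw [← Finset.sum_neg_distrib]
    refine Finset.sum_congr rfl fun i hi => ?_
    have hik : i < k := Finset.mem_range.mp hi
    rw [show k - i = (k - (i + 1)) + 1 from by omega, pow_succ]
    ring
  rw [← Fv_rec, hT2, hT3, hT4]
  push_cast
  ring
lemma pderiv_natCast (p n : ℕ) : MvPolynomial.pderiv p ((n : ℕ) : Rt) = 0 := by
  rw [← map_natCast (MvPolynomial.C : ℚ →+* Rt) n]
  exact MvPolynomial.pderiv_C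

lemma neg_one_pow_C (n : ℕ) : ((-1 : Rt) ^ n) = MvPolynomial.C ((-1 : ℚ) ^ n) := by
  rw [map_pow, map_neg, map_one]

lemma pderiv_Zv (p m : ℕ) (r : ℕ) : MvPolynomial.pderiv p (Zv m ((r : ℕ) : Rt))
    = if m = p then (-1 : Rt) ^ (m + 1) else 0 := by
  rw [Zv_eq, neg_one_pow_C, MvPolynomial.pderiv_C_mul, map_add, pderiv_natCast, zero_add,
    MvPolynomial.pderiv_X, Pi.single_apply]
  split_ifs with h
  · rw [mul_one]
  · rw [mul_zero]

lemma pderiv_mul (p : ℕ) (a b : Rt) :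
    MvPolynomial.pderiv p (a * b) = a * MvPolynomial.pderiv p b + b * MvPolynomial.pderiv p a := by
  rw [Derivation.leibniz, smul_eq_mul, smul_eq_mul]

lemma pderiv_Fv_of_zero (r : ℕ) : ∀ k, MvPolynomial.pderiv 0 (Fv k ((r : ℕ) : Rt)) = 0 := by
  intro k
  induction k using Nat.strong_induction_on with
  | _ k ih =>
  rcases k with _ | k
  · rw [Fv_zero]; exact MvPolynomial.pderiv_one
  apply nat_cancel (Nat.succ_ne_zero k) (b := 0)
  rw [mul_zero]
  have h := congrArg (MvPolynomial.pderiv 0) (Fv_rec k ((r : ℕ) : Rt))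
  rw [pderiv_mul, pderiv_natCast, mul_zero, add_zero, map_sum] at h
  rw [h]
  refine Finset.sum_eq_zero fun j hj => ?_
  have hjk : j ≤ k := by have := Finset.mem_range.mp hj; omega
  rw [pderiv_mul, ih j (by omega), mul_zero, pderiv_Zv, if_neg (by omega), mul_zero, add_zero]

lemma pderiv_Fv (p : ℕ) (hp : 1 ≤ p) (r : ℕ) :
    ∀ k, MvPolynomial.pderiv p (Fv k ((r : ℕ) : Rt))
      = if p ≤ k then
          MvPolynomial.C ((-1 : ℚ) ^ (p + 1) * (p : ℚ)⁻¹) * Fv (k - p) ((r : ℕ) : Rt)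
        else 0 := by
  intro k
  induction k using Nat.strong_induction_on with
  | _ k ih =>
  set c : Rt := ((r : ℕ) : Rt) with hc
  set A : Rt := MvPolynomial.C ((-1 : ℚ) ^ (p + 1) * (p : ℚ)⁻¹) with hAdef
  rcases k with _ | k
  · rw [if_neg (by omega), Fv_zero]
    exact MvPolynomial.pderiv_one
  have h := congrArg (MvPolynomial.pderiv p) (Fv_rec k c)
  rw [pderiv_mul, pderiv_natCast, mul_zero, add_zero, map_sum] at h
  have hterm : ∀ j ∈ Finset.range (k + 1),
      MvPolynomial.pderiv p (Zv (k + 1 - j) c * Fv j c)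
        = Zv (k + 1 - j) c * (if p ≤ j then A * Fv (j - p) c else 0)
          + Fv j c * (if k + 1 - j = p then (-1 : Rt) ^ (k + 1 - j + 1) else 0) := by
    intro j hj
    rw [pderiv_mul, ih j (by have := Finset.mem_range.mp hj; omega), pderiv_Zv]
  rw [Finset.sum_congr rfl hterm, Finset.sum_add_distrib] at h
  -- second sum
  have hSb : (∑ j ∈ Finset.range (k + 1),
      Fv j c * (if k + 1 - j = p then (-1 : Rt) ^ (k + 1 - j + 1) else 0))
      = if p ≤ k + 1 then (-1 : Rt) ^ (p + 1) * Fv (k + 1 - p) c else 0 := by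
    by_cases hpk : p ≤ k + 1
    · rw [if_pos hpk]
      rw [Finset.sum_eq_single_of_mem (k + 1 - p)
        (Finset.mem_range.mpr (by omega))
        (fun j _ hne => by
          rw [if_neg (by omega), mul_zero])]
      rw [if_pos (by omega), show k + 1 - (k + 1 - p) = p from by omega]
      ring
    · rw [if_neg hpk]
      refine Finset.sum_eq_zero fun j hj => ?_
      have := Finset.mem_range.mp hj
      rw [if_neg (by omega), mul_zero]
  -- first sum
  have hSa : (∑ j ∈ Finset.range (k + 1),
      Zv (k + 1 - j) c * (if p ≤ j then A * Fv (j - p) c else 0))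
      = if p ≤ k + 1 then A * (((k + 1 - p : ℕ) : Rt) * Fv (k + 1 - p) c) else 0 := by
    by_cases hpk : p ≤ k + 1
    · rw [if_pos hpk]
      have hsplit : ∑ j ∈ Finset.range (k + 1),
          Zv (k + 1 - j) c * (if p ≤ j then A * Fv (j - p) c else 0)
          = ∑ j ∈ Finset.Ico p (k + 1), Zv (k + 1 - j) c * (A * Fv (j - p) c) := by
        rw [Finset.range_eq_Ico, ← Finset.sum_Ico_consecutive _ (Nat.zero_le p) hpk]
        rw [Finset.sum_eq_zero (fun j hj => by
          have := Finset.mem_Ico.mp hj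
          rw [if_neg (by omega), mul_zero]), zero_add]
        exact Finset.sum_congr rfl fun j hj => by
          rw [if_pos (Finset.mem_Ico.mp hj).1]
      rw [hsplit, Finset.sum_Ico_eq_sum_range]
      rcases Nat.lt_or_ge p (k + 1) with hlt | hge
      · have hk1p : k + 1 - p = (k - p) + 1 := by omega
        rw [hk1p]
        have := Fv_rec (k - p) c
        calc ∑ i ∈ Finset.range (k - p + 1), Zv (k + 1 - (p + i)) c * (A * Fv (p + i - p) c)
            = A * ∑ i ∈ Finset.range (k - p + 1), Zv (k - p + 1 - i) c * Fv i c := by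
              rw [Finset.mul_sum]
              exact Finset.sum_congr rfl fun i hi => by
                rw [show k + 1 - (p + i) = k - p + 1 - i from by omega,
                  show p + i - p = i from by omega]
                ring
          _ = A * (((k - p + 1 : ℕ) : Rt) * Fv (k - p + 1) c) := by rw [← Fv_rec]
      · have : k + 1 - p = 0 := by omega
        rw [this, Finset.range_zero, Finset.sum_empty, Nat.cast_zero, zero_mul, mul_zero]
    · rw [if_neg hpk]
      refine Finset.sum_eq_zero fun j hj => ?_
      have := Finset.mem_range.mp hj
      rw [if_neg (by omega), mul_zero]
  rw [hSa, hSb] at h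
  by_cases hpk : p ≤ k + 1
  · simp only [if_pos hpk] at h ⊢
    apply nat_cancel (Nat.succ_ne_zero k)
    have hscal : A * (((k + 1 - p : ℕ) : Rt)) + (-1 : Rt) ^ (p + 1)
        = ((k + 1 : ℕ) : Rt) * A := by
      rw [hAdef, neg_one_pow_C, ← map_natCast (MvPolynomial.C : ℚ →+* Rt) (k + 1 - p),
        ← map_natCast (MvPolynomial.C : ℚ →+* Rt) (k + 1), ← _root_.map_mul, ← _root_.map_add,
        ← _root_.map_mul]
      congr 1
      have hcast : ((k + 1 - p : ℕ) : ℚ) = ((k + 1 : ℕ) : ℚ) - (p : ℚ) := by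
        rw [Nat.cast_sub hpk]
      have hp0 : (p : ℚ) ≠ 0 := Nat.cast_ne_zero.mpr (by omega)
      rw [hcast]
      field_simp
      ring
    calc ((k + 1 : ℕ) : Rt) * MvPolynomial.pderiv p (Fv (k + 1) c)
        = A * (((k + 1 - p : ℕ) : Rt) * Fv (k + 1 - p) c)
            + (-1 : Rt) ^ (p + 1) * Fv (k + 1 - p) c := h
      _ = (A * (((k + 1 - p : ℕ) : Rt)) + (-1 : Rt) ^ (p + 1)) * Fv (k + 1 - p) c := by ring
      _ = ((k + 1 : ℕ) : Rt) * (A * Fv (k + 1 - p) c) := by rw [hscal]; ring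
  · simp only [if_neg hpk] at h ⊢
    apply nat_cancel (Nat.succ_ne_zero k) (b := 0)
    rw [h, zero_add, mul_zero]
open Matrix Polynomial in
noncomputable def Emat (n : ℕ) : Matrix (Fin n) (Fin n) Rt :=
  Matrix.of fun i j : Fin n => Fv (2 * (i : ℕ) + 1) (((j : ℕ) : ℕ) : Rt)

open Matrix Polynomial in
lemma qval_eq (n : ℕ) : qval n = (Emat n).det := by
  rw [qval, Qcas, ← Polynomial.coe_evalRingHom, RingHom.map_det]
  congr 1
  refine Matrix.ext fun i j => ?_
  simp [Emat, Fv, Polynomial.eval_comp]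

open Matrix in
noncomputable def Tmat (n : ℕ) : Matrix (Fin n) (Fin n) Rt :=
  Matrix.of fun j l : Fin n =>
    (if j = l then 1 else 0) - (if (j : ℕ) + 1 = (l : ℕ) then 1 else 0)

open Matrix in
lemma Tmat_det (n : ℕ) : (Tmat n).det = 1 := by
  have h : (Tmat n).BlockTriangular id := by
    intro i j hij
    have hij' : (j : ℕ) < (i : ℕ) := hij
    simp only [Tmat, Matrix.of_apply]
    rw [if_neg (fun hc => by subst hc; omega), if_neg (by omega), sub_zero]
  rw [Matrix.det_of_upperTriangular h]
  refine Finset.prod_eq_one fun i _ => ?_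
  simp only [Tmat, Matrix.of_apply]
  rw [if_neg (by omega : ¬ (i : ℕ) + 1 = (i : ℕ)), sub_zero]
  simp

open Matrix in
lemma mulT_zero {m : ℕ} (B : Matrix (Fin (m + 1)) (Fin (m + 1)) Rt) (i : Fin (m + 1)) :
    (B * Tmat (m + 1)) i 0 = B i 0 := by
  rw [Matrix.mul_apply]
  have h : ∀ x : Fin (m + 1), B i x * Tmat (m + 1) x 0
      = if x = 0 then B i x else 0 := by
    intro x
    simp only [Tmat, Matrix.of_apply]
    rw [mul_sub, mul_ite, mul_one, mul_zero, mul_ite, mul_one, mul_zero,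
      if_neg (by simp : ¬ (x : ℕ) + 1 = ((0 : Fin (m + 1)) : ℕ)), sub_zero]
  rw [Finset.sum_congr rfl fun x _ => h x, Finset.sum_ite_eq' Finset.univ 0 fun x => B i x,
    if_pos (Finset.mem_univ _)]

open Matrix in
lemma mulT_succ {m : ℕ} (B : Matrix (Fin (m + 1)) (Fin (m + 1)) Rt) (i : Fin (m + 1))
    (l : Fin m) :
    (B * Tmat (m + 1)) i l.succ = B i l.succ - B i l.castSucc := by
  rw [Matrix.mul_apply]
  have h : ∀ x : Fin (m + 1), B i x * Tmat (m + 1) x l.succ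
      = (if x = l.succ then B i x else 0) - (if x = l.castSucc then B i x else 0) := by
    intro x
    simp only [Tmat, Matrix.of_apply]
    rw [mul_sub, mul_ite, mul_one, mul_zero, mul_ite, mul_one, mul_zero]
    congr 1
    have hcond : ((x : ℕ) + 1 = ((l.succ : Fin (m + 1)) : ℕ)) ↔ x = l.castSucc := by
      rw [Fin.ext_iff, Fin.val_succ, Fin.coe_castSucc]
      omega
    simp only [hcond]
  rw [Finset.sum_congr rfl fun x _ => h x, Finset.sum_sub_distrib,
    Finset.sum_ite_eq' Finset.univ l.succ fun x => B i x,
    Finset.sum_ite_eq' Finset.univ l.castSucc fun x => B i x,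
    if_pos (Finset.mem_univ _), if_pos (Finset.mem_univ _)]

open Matrix in
lemma det_Cmat (k : ℕ) :
    (Matrix.of fun i l : Fin k => Fv (2 * (i : ℕ)) (((l : ℕ) : ℕ) : Rt)).det
      = if k = 0 then 1 else qval (k - 1) := by
  rcases k with _ | m
  · rw [if_pos rfl, Matrix.det_fin_zero]
  rw [if_neg (Nat.succ_ne_zero m), Nat.succ_sub_one]
  set Cm := (Matrix.of fun i l : Fin (m + 1) => Fv (2 * (i : ℕ)) (((l : ℕ) : ℕ) : Rt)) with hCm
  have h1 : Cm.det = (Cm * Tmat (m + 1)).det := by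
    rw [Matrix.det_mul, Tmat_det, mul_one]
  rw [h1, Matrix.det_succ_row_zero,
    Finset.sum_eq_single_of_mem 0 (Finset.mem_univ _) (fun j _ hne => by
      obtain ⟨l, rfl⟩ := Fin.eq_succ_of_ne_zero hne
      rw [mulT_succ]
      have : Cm 0 l.succ - Cm 0 l.castSucc = 0 := by
        simp only [hCm, Matrix.of_apply, Fin.val_zero, Nat.mul_zero, Fv_zero]
        ring
      rw [this, mul_zero, zero_mul])]
  rw [mulT_zero]
  have hC00 : Cm 0 0 = 1 := by
    simp only [hCm, Matrix.of_apply, Fin.val_zero, Nat.mul_zero, Fv_zero]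
  rw [hC00, Fin.succAbove_zero]
  have hminor : (Cm * Tmat (m + 1)).submatrix Fin.succ Fin.succ = Emat m := by
    refine Matrix.ext fun i l => ?_
    rw [Matrix.submatrix_apply, mulT_succ]
    have hd := Fv_diff (2 * (i : ℕ) + 1) (((l : ℕ) : ℕ) : Rt)
    simp only [hCm, Emat, Matrix.of_apply, Fin.val_succ, Fin.coe_castSucc]
    have h2 : 2 * ((i : ℕ) + 1) = 2 * (i : ℕ) + 1 + 1 := by ring
    have h3 : (((l : ℕ) + 1 : ℕ) : Rt) = (((l : ℕ) : ℕ) : Rt) + 1 := by push_cast; ring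
    rw [h2, h3, hd]
    ring
  rw [hminor, ← qval_eq]
  simp

open Matrix in
lemma detB (k : ℕ) : ((Emat (k + 1)).updateRow (Fin.last k) (fun _ => 1)).det
    = (-1 : Rt) ^ k * (if k = 0 then 1 else qval (k - 1)) := by
  set B := (Emat (k + 1)).updateRow (Fin.last k) (fun _ => 1) with hB
  have h1 : B.det = (B * Tmat (k + 1)).det := by
    rw [Matrix.det_mul, Tmat_det, mul_one]
  rw [h1, Matrix.det_succ_row _ (Fin.last k),
    Finset.sum_eq_single_of_mem 0 (Finset.mem_univ _) (fun j _ hne => by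
      obtain ⟨l, rfl⟩ := Fin.eq_succ_of_ne_zero hne
      rw [mulT_succ]
      have : B (Fin.last k) l.succ - B (Fin.last k) l.castSucc = 0 := by
        rw [hB, Matrix.updateRow_self]
        ring
      rw [this, mul_zero, zero_mul])]
  rw [mulT_zero, hB, Matrix.updateRow_self]
  rw [Fin.succAbove_last]
  have hminor : (B * Tmat (k + 1)).submatrix Fin.castSucc (Fin.succAbove 0)
      = Matrix.of fun i l : Fin k => Fv (2 * (i : ℕ)) (((l : ℕ) : ℕ) : Rt) := by
    rw [Fin.succAbove_zero]
    refine Matrix.ext fun i l => ?_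
    rw [Matrix.submatrix_apply, mulT_succ]
    have hBrow : ∀ x, B i.castSucc x = Emat (k + 1) i.castSucc x := by
      intro x
      rw [hB, Matrix.updateRow_ne (ne_of_lt (Fin.castSucc_lt_last i))]
    rw [hBrow, hBrow]
    have hd := Fv_diff (2 * (i : ℕ)) (((l : ℕ) : ℕ) : Rt)
    simp only [Emat, Matrix.of_apply, Fin.val_succ, Fin.coe_castSucc]
    have h3 : (((l : ℕ) + 1 : ℕ) : Rt) = (((l : ℕ) : ℕ) : Rt) + 1 := by push_cast; ring
    rw [h3, hd]
    ring
  rw [hminor, det_Cmat]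
  simp [Fin.val_last]
/-- for every `k ≥ 1` (written `k + 1` below):
(i) `∂q_k/∂t_j = 0` whenever `j` is even or `j > 2k - 1`, so `q_k` depends only
on the odd variables `t₁, t₃, …, t_{2k-1}`;
(ii) `∂q_k/∂t_{2k-1} = ((-1)^{k+1}/(2k-1)) q_{k-2}`; in particular `q_k` is
linear in `t_{2k-1}` of the form `q_k = ((-1)^{k+1}/(2k-1)) q_{k-2} t_{2k-1} + ψ_k`.
Here the paper's index `k` is `k + 1`, so `2k - 1` is `2k + 1`, `(-1)^{k+1}` is
`(-1)^{k+2}`, and `q_{k-2}` is `q (k-1)` (with `q₋₁ = 1` when `k = 0`). -/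
theorem qval_odd_dependence (k : ℕ) :
    (∀ j : ℕ, (Even j ∨ 2 * k + 1 < j) → MvPolynomial.pderiv j (qval (k + 1)) = 0) ∧
    MvPolynomial.pderiv (2 * k + 1) (qval (k + 1))
      = MvPolynomial.C ((-1 : ℚ) ^ (k + 2) * (2 * (k : ℚ) + 1)⁻¹)
          * (if k = 0 then 1 else qval (k - 1)) := by
  constructor
  · intro j hj
    rw [qval_eq, deriv_det (MvPolynomial.pderiv j)]
    refine Finset.sum_eq_zero fun i _ => ?_
    have hik : (i : ℕ) ≤ k := by omega
    rcases Nat.eq_zero_or_pos j with hj0 | hjpos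
    · subst hj0
      apply Matrix.det_eq_zero_of_row_eq_zero i
      intro l
      rw [congrFun (Matrix.updateRow_self) l]
      show MvPolynomial.pderiv 0 (Fv (2 * (i : ℕ) + 1) (((l : ℕ) : ℕ) : Rt)) = 0
      exact pderiv_Fv_of_zero (l : ℕ) _
    by_cases hle : j ≤ 2 * (i : ℕ) + 1
    · -- j must be even here
      have he : Even j := by
        rcases hj with he | hgt
        · exact he
        · omega
      obtain ⟨q, hq⟩ := he
      have hq1 : 1 ≤ q := by omega
      have hqi : q ≤ (i : ℕ) := by omega
      set i' : Fin (k + 1) := ⟨(i : ℕ) - q, by omega⟩ with hi'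
      have hne : i' ≠ i := by
        intro hcon
        rw [Fin.ext_iff] at hcon
        simp only [hi'] at hcon
        omega
      have hrow : (fun l => MvPolynomial.pderiv j (Emat (k + 1) i l))
          = (MvPolynomial.C ((-1 : ℚ) ^ (j + 1) * (j : ℚ)⁻¹) : Rt) • (Emat (k + 1) i') := by
        funext l
        simp only [Pi.smul_apply, smul_eq_mul]
        show MvPolynomial.pderiv j (Fv (2 * (i : ℕ) + 1) (((l : ℕ) : ℕ) : Rt)) = _
        rw [pderiv_Fv j hjpos (l : ℕ) (2 * (i : ℕ) + 1), if_pos hle]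
        congr 2
        show 2 * (i : ℕ) + 1 - j = 2 * ((i' : Fin (k + 1)) : ℕ) + 1
        rw [hi']
        simp only
        omega
      rw [hrow, Matrix.det_updateRow_smul, Matrix.det_updateRow_eq_zero hne, mul_zero]
    · apply Matrix.det_eq_zero_of_row_eq_zero i
      intro l
      rw [congrFun (Matrix.updateRow_self) l]
      show MvPolynomial.pderiv j (Fv (2 * (i : ℕ) + 1) (((l : ℕ) : ℕ) : Rt)) = 0
      rw [pderiv_Fv j hjpos (l : ℕ) (2 * (i : ℕ) + 1), if_neg hle]
  · rw [qval_eq, deriv_det (MvPolynomial.pderiv (2 * k + 1))]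
    rw [Finset.sum_eq_single_of_mem (Fin.last k) (Finset.mem_univ _) (fun i _ hne => by
      have hik : (i : ℕ) < k := by
        have h1 : (i : ℕ) ≤ k := by omega
        rcases Nat.lt_or_ge (i : ℕ) k with h | h
        · exact h
        · exact absurd (Fin.ext (by rw [Fin.val_last]; omega : (i : ℕ) = (Fin.last k : ℕ))) hne
      apply Matrix.det_eq_zero_of_row_eq_zero i
      intro l
      rw [congrFun (Matrix.updateRow_self) l]
      show MvPolynomial.pderiv (2 * k + 1) (Fv (2 * (i : ℕ) + 1) (((l : ℕ) : ℕ) : Rt)) = 0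
      rw [pderiv_Fv (2 * k + 1) (by omega) (l : ℕ) (2 * (i : ℕ) + 1), if_neg (by omega)])]
    have hrow : (fun l => MvPolynomial.pderiv (2 * k + 1) (Emat (k + 1) (Fin.last k) l))
        = (MvPolynomial.C ((-1 : ℚ) ^ (2 * k + 1 + 1) * ((2 * k + 1 : ℕ) : ℚ)⁻¹) : Rt)
            • (fun _ : Fin (k + 1) => (1 : Rt)) := by
      funext l
      simp only [Pi.smul_apply, smul_eq_mul]
      show MvPolynomial.pderiv (2 * k + 1)
          (Fv (2 * ((Fin.last k : Fin (k + 1)) : ℕ) + 1) (((l : ℕ) : ℕ) : Rt)) = _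
      rw [Fin.val_last, pderiv_Fv (2 * k + 1) (by omega) (l : ℕ) (2 * k + 1),
        if_pos le_rfl, Nat.sub_self, Fv_zero, mul_one]
    rw [hrow, Matrix.det_updateRow_smul, detB, ← mul_assoc, neg_one_pow_C,
      ← _root_.map_mul]
    congr 2
    have h1 : (-1 : ℚ) ^ (2 * k + 1 + 1) = 1 := by
      rw [show 2 * k + 1 + 1 = 2 * (k + 1) from by ring, pow_mul]
      norm_num
    have h2 : (-1 : ℚ) ^ (k + 2) = (-1 : ℚ) ^ k := by
      rw [pow_add]
      norm_num
    rw [h1, h2]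
    push_cast
    ring
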